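/- Let D be a digraph on n vertices such that every nonempty induced subdigraph D' of D contains a vertex v whose out-neighborhood inside D' induces an acyclic subdigraph (this condition holds, in particular, whenever χ⃗(D) ≤ 2). Then χ⃗(D) ≤ 2·⌈√n⌉. (This is the combinatorial content of the paper's Theorem that a 2-dicolorable digraph on n vertices can be properly colored with at most 2√n colors in polynomial time.) -/

import Mathlib

/-- A set `S` of vertices of the digraph with arc relation `A` is acyclic:
the subdigraph induced on `S` contains no directed cycle. -/
def AcyclicSet {V : Type*} (A : V → V → Prop) (S : Set V) : Prop :=
  ∀ x, ¬ Relation.TransGen (fun a b => a ∈ S ∧ b ∈ S ∧ A a b) x x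

/-- The induced subdigraph `D[S]` can be properly dicolored with at most `n` colors. -/
def HasDicoloringOn {V : Type*} (A : V → V → Prop) (S : Set V) (n : ℕ) : Prop :=
  ∃ f : V → ℕ, (∀ v ∈ S, f v < n) ∧ ∀ i, AcyclicSet A {v | v ∈ S ∧ f v = i}

/-- The dichromatic number of the induced subdigraph `D[S]`. -/
noncomputable def dichromOn {V : Type*} (A : V → V → Prop) (S : Set V) : ℕ :=
  sInf {n | HasDicoloringOn A S n}

lemma acyclic_mono {V : Type*} {A : V → V → Prop} {S T : Set V} (hST : S ⊆ T)
    (hT : AcyclicSet A T) : AcyclicSet A S := by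
  intro x hx
  exact hT x (Relation.TransGen.mono (p := fun a b => a ∈ T ∧ b ∈ T ∧ A a b) (fun a b hab => ⟨hST hab.1, hST hab.2.1, hab.2.2⟩) x x hx)

lemma transGen_avoid {V : Type*} {r : V → V → Prop} {v : V}
    (hv : ∀ u, ¬ r v u) {x y : V} (hxy : Relation.TransGen r x y) (hy : y ≠ v) :
    Relation.TransGen (fun a b => r a b ∧ a ≠ v ∧ b ≠ v) x y := by
  induction hxy with
  | single h => exact .single ⟨h, fun e => hv _ (e ▸ h), hy⟩
  | @tail b c hxb hstep ih =>
      have hb : b ≠ v := fun e => hv _ (e ▸ hstep)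
      exact (ih hb).tail ⟨hstep, hb, hy⟩

lemma transGen_src {V : Type*} {r : V → V → Prop} {x y : V}
    (h : Relation.TransGen r x y) : ∃ u, r x u := by
  induction h with
  | single h => exact ⟨_, h⟩
  | tail _ _ ih => exact ih

lemma key {V : Type*} (A : V → V → Prop) (hirr : ∀ x, ¬ A x x)
    (h : ∀ S : Set V, S.Nonempty → ∃ v ∈ S, AcyclicSet A {u | u ∈ S ∧ A v u})
    (k : ℕ) :
    ∀ (n : ℕ) (S : Finset V) (j : ℕ), S.card ≤ n → S.card ≤ j * k →
      HasDicoloringOn A ↑S (k + j) := by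
  classical
  intro n
  induction n with
  | zero =>
      intro S j h1 _
      have hS : S = ∅ := Finset.card_eq_zero.mp (Nat.le_zero.mp h1)
      subst hS
      refine ⟨fun _ => 0, by simp, fun i x hx => ?_⟩
      cases hx with
      | single hstep => simpa using hstep.1
      | tail _ hstep => simpa using hstep.2.1
  | succ n ih =>
      intro S j hn hjk
      by_cases hS : S.Nonempty
      · obtain ⟨v, hvS, hacy⟩ := h ↑S (Finset.coe_nonempty.mpr hS)
        have hvS' : v ∈ S := hvS
        set N : Finset V := S.filter (fun u => A v u) with hN
        have hNsub : N ⊆ S := Finset.filter_subset _ _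
        have hmemN : ∀ u, u ∈ N ↔ u ∈ S ∧ A v u := by
          intro u; simp [hN]
        have hk1 : 1 ≤ k := by
          rcases Nat.eq_zero_or_pos k with h0 | h1
          · exfalso; rw [h0, Nat.mul_zero] at hjk
            exact hS.card_pos.ne' (Nat.le_zero.mp hjk)
          · exact h1
        have hj1 : 1 ≤ j := by
          rcases Nat.eq_zero_or_pos j with h0 | h1
          · exfalso; rw [h0, Nat.zero_mul] at hjk
            exact hS.card_pos.ne' (Nat.le_zero.mp hjk)
          · exact h1
        by_cases hbig : k ≤ N.card
        · -- use one fresh color on N, recurse on S \ N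
          have hcardS' : (S \ N).card = S.card - N.card := Finset.card_sdiff_of_subset hNsub
          have hNleS : N.card ≤ S.card := Finset.card_le_card hNsub
          obtain ⟨f, hf1, hf2⟩ := ih (S \ N) (j - 1)
            (by omega)
            (by rw [hcardS', Nat.sub_one_mul]; omega)
          refine ⟨fun w => if w ∈ N then k + (j - 1) else f w, ?_, ?_⟩
          · intro w hw
            by_cases hwN : w ∈ N
            · simp only [hwN, if_pos]; omega
            · have hw' : w ∈ S \ N := Finset.mem_sdiff.mpr ⟨hw, hwN⟩
              simp only [hwN, if_neg, if_false]
              have := hf1 w hw'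
              omega
          · intro i
            by_cases hi : i = k + (j - 1)
            · refine acyclic_mono (T := {u | u ∈ (↑S : Set V) ∧ A v u}) ?_ hacy
              rintro w ⟨hwS, hwi⟩
              have hwS' : w ∈ S := hwS
              by_cases hwN : w ∈ N
              · exact ⟨hwS, ((hmemN w).mp hwN).2⟩
              · exfalso
                simp only [hwN, if_neg, if_false] at hwi
                have := hf1 w (Finset.mem_sdiff.mpr ⟨hwS', hwN⟩)
                omega
            · refine acyclic_mono (T := {w | w ∈ (↑(S \ N) : Set V) ∧ f w = i}) ?_ (hf2 i)
              rintro w ⟨hwS, hwi⟩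
              have hwS' : w ∈ S := hwS
              by_cases hwN : w ∈ N
              · exfalso; simp only [hwN, if_pos] at hwi; exact hi hwi.symm
              · simp only [hwN, if_neg, if_false] at hwi
                exact ⟨Finset.mem_sdiff.mpr ⟨hwS', hwN⟩, hwi⟩
        · -- degeneracy step on v
          push_neg at hbig
          have hvN : v ∉ N := fun hvN => hirr v ((hmemN v).mp hvN).2
          have hcard : (S.erase v).card ≤ n := by
            have := Finset.card_erase_of_mem hvS'
            have := hS.card_pos
            omega
          obtain ⟨f, hf1, hf2⟩ := ih (S.erase v) j hcard
            (le_trans (Finset.card_le_card (Finset.erase_subset _ _)) hjk)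
          -- find a color c < k not used on N
          have hTcard : (N.image f).card < k :=
            lt_of_le_of_lt (Finset.card_image_le) hbig
          have hnotsub : ¬ Finset.range k ⊆ N.image f := by
            intro hsub
            have := Finset.card_le_card hsub
            simp only [Finset.card_range] at this
            omega
          obtain ⟨c, hcr, hcT⟩ := Finset.not_subset.mp hnotsub
          have hck : c < k := Finset.mem_range.mp hcr
          refine ⟨fun w => if w = v then c else f w, ?_, ?_⟩
          · intro w hw
            by_cases hwv : w = v
            · simp only [hwv, if_pos]; omega
            · simp only [hwv, if_neg, if_false]
              exact lt_of_lt_of_le (hf1 w (Finset.mem_erase.mpr ⟨hwv, hw⟩)) le_rfl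
          · intro i
            by_cases hi : i = c
            · obtain rfl : c = i := hi.symm
              intro x hx
              set C : Set V := {w | w ∈ (↑S : Set V) ∧ (if w = v then c else f w) = c}
                with hC
              set r : V → V → Prop := fun a b => a ∈ C ∧ b ∈ C ∧ A a b with hr
              have hv : ∀ u, ¬ r v u := by
                rintro u ⟨_, ⟨huS, hufc⟩, hAvu⟩
                have huv : u ≠ v := fun e => hirr v (e ▸ hAvu)
                simp only [huv, if_neg, if_false] at hufc
                have huN : u ∈ N := (hmemN u).mpr ⟨huS, hAvu⟩
                exact hcT (Finset.mem_image.mpr ⟨u, huN, hufc⟩)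
              have hxv : x ≠ v := by
                rintro rfl
                obtain ⟨u, hst⟩ := transGen_src hx
                exact hv _ hst
              have hx' := transGen_avoid hv hx hxv
              refine hf2 c x (Relation.TransGen.mono (p := fun a b => a ∈ {w | w ∈ (↑(S.erase v) : Set V) ∧ f w = c} ∧
                b ∈ {w | w ∈ (↑(S.erase v) : Set V) ∧ f w = c} ∧ A a b) ?_ x x hx')
              rintro a b ⟨⟨⟨haS, hac⟩, ⟨hbS, hbc⟩, hab⟩, hav, hbv⟩
              simp only [hav, hbv, if_neg, if_false] at hac hbc
              exact ⟨⟨Finset.mem_erase.mpr ⟨hav, haS⟩, hac⟩,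
                ⟨Finset.mem_erase.mpr ⟨hbv, hbS⟩, hbc⟩, hab⟩
            · refine acyclic_mono
                (T := {w | w ∈ (↑(S.erase v) : Set V) ∧ f w = i}) ?_ (hf2 i)
              rintro w ⟨hwS, hwi⟩
              have hwS' : w ∈ S := hwS
              by_cases hwv : w = v
              · exfalso; simp only [hwv, if_pos] at hwi; exact hi hwi.symm
              · simp only [hwv, if_neg, if_false] at hwi
                exact ⟨Finset.mem_erase.mpr ⟨hwv, hwS'⟩, hwi⟩
      · -- S empty
        rw [Finset.not_nonempty_iff_eq_empty] at hS
        subst hS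
        refine ⟨fun _ => 0, by simp, fun i x hx => ?_⟩
        cases hx with
        | single hstep => simpa using hstep.1
        | tail _ hstep => simpa using hstep.2.1

/-- If in every nonempty induced subdigraph `D[S]` of the digraph `D` on `n` vertices
there is a vertex `v ∈ S` whose out-neighborhood inside `S` induces an acyclic
subdigraph (which holds, in particular, whenever `χ⃗(D) ≤ 2`), then
`χ⃗(D) ≤ 2⌈√n⌉`. -/
theorem stmt2 {V : Type*} [Fintype V] (A : V → V → Prop) (hirr : ∀ x, ¬ A x x)
    (h : ∀ S : Set V, S.Nonempty → ∃ v ∈ S, AcyclicSet A {u | u ∈ S ∧ A v u}) :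
    dichromOn A Set.univ ≤ 2 * ⌈Real.sqrt (Fintype.card V)⌉₊ := by
  classical
  set k := ⌈Real.sqrt (Fintype.card V)⌉₊ with hk
  have hn : Fintype.card V ≤ k * k := by
    have h1 : Real.sqrt (Fintype.card V) ≤ (k : ℝ) := Nat.le_ceil _
    have h2 : (Fintype.card V : ℝ) ≤ (k : ℝ) * k := by
      have hs := Real.sq_sqrt (by positivity : (0:ℝ) ≤ (Fintype.card V : ℝ))
      nlinarith [Real.sqrt_nonneg ((Fintype.card V : ℝ))]
    exact_mod_cast h2
  have hkey := key A hirr h k (Fintype.card V) Finset.univ k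
    (by simp) (by simpa using hn)
  rw [Finset.coe_univ] at hkey
  have hmem : HasDicoloringOn A (Set.univ : Set V) (2 * k) := by
    rw [two_mul]; exact hkey
  exact Nat.sInf_le hmem
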